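/- In an arrangement of n lines, every triangle of minimum area is a face of the arrangement; that is, no line of the arrangement intersects the interior of a minimum-area triangle. -/

import Mathlib

open scoped Classical

/-- A line in the plane given by the equation `a·x + b·y = c` with `(a,b) ≠ (0,0)`. -/
structure Line where
  a : ℝ
  b : ℝ
  c : ℝ
  hab : (a, b) ≠ (0, 0)

namespace Line

/-- The set of points of a line. -/
def pts (L : Line) : Set (ℝ × ℝ) := {p | L.a * p.1 + L.b * p.2 = L.c}

/-- The determinant of the directions of two lines. -/
def lineDet (L M : Line) : ℝ := L.a * M.b - L.b * M.a

/-- Two lines are parallel (possibly equal) when their directions are proportional. -/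
def Parallel (L M : Line) : Prop := lineDet L M = 0

/-- The intersection point of two non-parallel lines. -/
noncomputable def inter (L M : Line) : ℝ × ℝ :=
  ((L.c * M.b - M.c * L.b) / lineDet L M, (L.a * M.c - M.a * L.c) / lineDet L M)

end Line

/-- Standard Euclidean area of the triangle with vertices `p`, `q`, `r`. -/
noncomputable def triangleArea (p q r : ℝ × ℝ) : ℝ :=
  |(q.1 - p.1) * (r.2 - p.2) - (r.1 - p.1) * (q.2 - p.2)| / 2

/-- The area of the triangle determined by three (pairwise non-parallel) lines. -/
noncomputable def triArea (L M N : Line) : ℝ :=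
  triangleArea (Line.inter L M) (Line.inter L N) (Line.inter M N)

/-- Three lines form a (non-degenerate) triangle when they are pairwise
non-parallel and not concurrent. -/
def FormsTriangle (L M N : Line) : Prop :=
  ¬ Line.Parallel L M ∧ ¬ Line.Parallel L N ∧ ¬ Line.Parallel M N ∧
    Line.inter L M ∉ N.pts

/-- The open region bounded by the triangle formed by three lines: the interior
of the convex hull of the three pairwise intersection points. -/
noncomputable def openTriangle (L M N : Line) : Set (ℝ × ℝ) :=
  interior (convexHull ℝ {Line.inter L M, Line.inter L N, Line.inter M N})

namespace Line

noncomputable def eval (L : Line) (p : ℝ × ℝ) : ℝ := L.a * p.1 + L.b * p.2 - L.c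

lemma mem_pts_iff (L : Line) (p : ℝ × ℝ) : p ∈ L.pts ↔ L.eval p = 0 := by
  simp [pts, eval, sub_eq_zero]

lemma ab_ne (L : Line) : L.a ≠ 0 ∨ L.b ≠ 0 := by
  by_contra h
  push_neg at h
  exact L.hab (by simp [Prod.ext_iff, h.1, h.2])

lemma parallel_comm {L M : Line} : Parallel L M ↔ Parallel M L := by
  unfold Parallel lineDet
  constructor <;> intro h <;> linarith

lemma eval_inter_left {L M : Line} (h : ¬ Parallel L M) : L.eval (inter L M) = 0 := by
  have hD : L.a * M.b - L.b * M.a ≠ 0 := h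
  simp only [eval, inter, lineDet]
  field_simp
  ring

lemma eval_inter_right {L M : Line} (h : ¬ Parallel L M) : M.eval (inter L M) = 0 := by
  have hD : L.a * M.b - L.b * M.a ≠ 0 := h
  simp only [eval, inter, lineDet]
  have key : M.a * (L.c * M.b - M.c * L.b) + M.b * (L.a * M.c - M.a * L.c)
      = M.c * (L.a * M.b - L.b * M.a) := by ring
  rw [mul_div_assoc', mul_div_assoc', ← add_div, key, mul_div_assoc, div_self hD]
  ring

lemma eq_inter {L M : Line} (h : ¬ Parallel L M) {p : ℝ × ℝ}
    (hL : L.eval p = 0) (hM : M.eval p = 0) : p = inter L M := by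
  have hD : L.a * M.b - L.b * M.a ≠ 0 := h
  simp only [eval] at hL hM
  have h1 : p.1 = (L.c * M.b - M.c * L.b) / (L.a * M.b - L.b * M.a) := by
    rw [eq_div_iff hD]; linear_combination M.b * hL - L.b * hM
  have h2 : p.2 = (L.a * M.c - M.a * L.c) / (L.a * M.b - L.b * M.a) := by
    rw [eq_div_iff hD]; linear_combination L.a * hM - M.a * hL
  exact Prod.ext h1 h2

lemma parallel_eval_const {L M : Line} (h : Parallel M L) {p q : ℝ × ℝ}
    (hp : L.eval p = 0) (hq : L.eval q = 0) : M.eval p = M.eval q := by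
  have h' : M.a * L.b - M.b * L.a = 0 := h
  simp only [eval] at hp hq ⊢
  rcases L.ab_ne with ha | hb
  · have h2 : L.a * (M.a * p.1 + M.b * p.2 - M.c) = L.a * (M.a * q.1 + M.b * q.2 - M.c) := by
      linear_combination M.a * (hp - hq) - (p.2 - q.2) * h'
    exact mul_left_cancel₀ ha h2
  · have h2 : L.b * (M.a * p.1 + M.b * p.2 - M.c) = L.b * (M.a * q.1 + M.b * q.2 - M.c) := by
      linear_combination M.b * (hp - hq) + (p.1 - q.1) * h'
    exact mul_left_cancel₀ hb h2

lemma mem_of_collinear {L : Line} {p q r : ℝ × ℝ} (hp : L.eval p = 0) (hq : L.eval q = 0)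
    (hpq : p ≠ q)
    (hcol : (q.1 - p.1) * (r.2 - p.2) - (r.1 - p.1) * (q.2 - p.2) = 0) : L.eval r = 0 := by
  have hne : q.1 - p.1 ≠ 0 ∨ q.2 - p.2 ≠ 0 := by
    by_contra hc
    push_neg at hc
    exact hpq (Prod.ext (by linarith [hc.1]) (by linarith [hc.2])).symm
  simp only [eval] at hp hq ⊢
  rcases hne with hu | hv
  · have h2 : (q.1 - p.1) * (L.a * r.1 + L.b * r.2 - L.c) = 0 := by
      linear_combination (q.1 - p.1) * hp + (r.1 - p.1) * (hq - hp) + L.b * hcol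
    exact (mul_eq_zero.mp h2).resolve_left hu
  · have h2 : (q.2 - p.2) * (L.a * r.1 + L.b * r.2 - L.c) = 0 := by
      linear_combination (q.2 - p.2) * hp + (r.2 - p.2) * (hq - hp) - L.a * hcol
    exact (mul_eq_zero.mp h2).resolve_left hv

lemma collinear_det {M : Line} {p q r : ℝ × ℝ} (hp : M.eval p = 0) (hq : M.eval q = 0)
    (hr : M.eval r = 0) :
    (q.1 - p.1) * (r.2 - p.2) - (r.1 - p.1) * (q.2 - p.2) = 0 := by
  simp only [eval] at hp hq hr
  rcases M.ab_ne with ha | hb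
  · have h2 : M.a * ((q.1 - p.1) * (r.2 - p.2) - (r.1 - p.1) * (q.2 - p.2)) = 0 := by
      linear_combination (r.2 - p.2) * (hq - hp) - (q.2 - p.2) * (hr - hp)
    exact (mul_eq_zero.mp h2).resolve_left ha
  · have h2 : M.b * ((q.1 - p.1) * (r.2 - p.2) - (r.1 - p.1) * (q.2 - p.2)) = 0 := by
      linear_combination (-(r.1 - p.1)) * (hq - hp) + (q.1 - p.1) * (hr - hp)
    exact (mul_eq_zero.mp h2).resolve_left hb

lemma eval_pair (L : Line) (x y : ℝ) : L.eval (x, y) = L.a * x + L.b * y - L.c := rfl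

lemma eval_combo3 (L : Line) (α β γ : ℝ) (u v w : ℝ × ℝ) (h : α + β + γ = 1) :
    L.eval (α • u + β • v + γ • w) = α * L.eval u + β * L.eval v + γ * L.eval w := by
  simp only [eval, Prod.fst_add, Prod.snd_add, Prod.smul_fst, Prod.smul_snd, smul_eq_mul]
  linear_combination (L.c) * h

end Line

lemma triangleArea_perm1 (p q r : ℝ × ℝ) : triangleArea q p r = triangleArea p q r := by
  unfold triangleArea
  rw [show (p.1 - q.1) * (r.2 - q.2) - (r.1 - q.1) * (p.2 - q.2)
      = -((q.1 - p.1) * (r.2 - p.2) - (r.1 - p.1) * (q.2 - p.2)) by ring, abs_neg]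

lemma triangleArea_perm2 (p q r : ℝ × ℝ) : triangleArea r p q = triangleArea p q r := by
  unfold triangleArea
  rw [show (p.1 - r.1) * (q.2 - r.2) - (q.1 - r.1) * (p.2 - r.2)
      = ((q.1 - p.1) * (r.2 - p.2) - (r.1 - p.1) * (q.2 - p.2)) by ring]

lemma frac_bounds {v w : ℝ} (hv : v ≠ 0) (hw : v * w ≤ 0) :
    0 < v / (v - w) ∧ v / (v - w) ≤ 1 ∧ (w ≠ 0 → v / (v - w) < 1) := by
  rcases hv.lt_or_gt with h | h
  · have hw0 : 0 ≤ w := by nlinarith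
    have hd : v - w < 0 := by linarith
    refine ⟨div_pos_of_neg_of_neg h hd, ?_, ?_⟩
    · rw [div_le_one_iff]
      exact Or.inr (Or.inr ⟨hd, by linarith⟩)
    · intro hw'
      have : 0 < w := lt_of_le_of_ne hw0 (Ne.symm hw')
      rw [div_lt_one_iff]
      exact Or.inr (Or.inr ⟨hd, by linarith⟩)
  · have hw0 : w ≤ 0 := by nlinarith
    have hd : 0 < v - w := by linarith
    refine ⟨div_pos h hd, (div_le_one hd).mpr (by linarith), ?_⟩
    · intro hw'
      have : w < 0 := lt_of_le_of_ne hw0 hw'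
      exact (div_lt_one hd).mpr (by linarith)

lemma cut (La Lb m : Line) (A B : ℝ × ℝ) (hab : ¬ Line.Parallel La Lb)
    (hA : La.eval A = 0) (hB : Lb.eval B = 0)
    (harea : 0 < triangleArea (Line.inter La Lb) A B)
    (hVA : m.eval (Line.inter La Lb) * m.eval A ≤ 0)
    (hVB : m.eval (Line.inter La Lb) * m.eval B ≤ 0)
    (hVne : m.eval (Line.inter La Lb) ≠ 0)
    (hor : m.eval A ≠ 0 ∨ m.eval B ≠ 0) :
    FormsTriangle La Lb m ∧ triArea La Lb m < triangleArea (Line.inter La Lb) A B := by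
  set V := Line.inter La Lb with hVdef
  have hVa : La.eval V = 0 := Line.eval_inter_left hab
  have hVb : Lb.eval V = 0 := Line.eval_inter_right hab
  have hnpa : ¬ Line.Parallel La m := by
    intro h
    have heq := Line.parallel_eval_const (Line.parallel_comm.mp h) hVa hA
    rw [← heq] at hVA
    exact absurd hVA (not_le.mpr (mul_self_pos.mpr hVne))
  have hnpb : ¬ Line.Parallel Lb m := by
    intro h
    have heq := Line.parallel_eval_const (Line.parallel_comm.mp h) hVb hB
    rw [← heq] at hVB
    exact absurd hVB (not_le.mpr (mul_self_pos.mpr hVne))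
  obtain ⟨hs0, hs1, hs1'⟩ := frac_bounds hVne hVA
  obtain ⟨ht0, ht1, ht1'⟩ := frac_bounds hVne hVB
  set s := m.eval V / (m.eval V - m.eval A) with hs
  set t := m.eval V / (m.eval V - m.eval B) with ht
  have hdA : m.eval V - m.eval A ≠ 0 := by
    intro h0
    have h1 : m.eval V = m.eval A := by linarith
    rw [← h1] at hVA
    exact absurd hVA (not_le.mpr (mul_self_pos.mpr hVne))
  have hdB : m.eval V - m.eval B ≠ 0 := by
    intro h0
    have h1 : m.eval V = m.eval B := by linarith
    rw [← h1] at hVB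
    exact absurd hVB (not_le.mpr (mul_self_pos.mpr hVne))
  have hsmul : s * (m.eval V - m.eval A) = m.eval V := div_mul_cancel₀ _ hdA
  have htmul : t * (m.eval V - m.eval B) = m.eval V := div_mul_cancel₀ _ hdB
  set X : ℝ × ℝ := (V.1 + s * (A.1 - V.1), V.2 + s * (A.2 - V.2)) with hX
  set Y : ℝ × ℝ := (V.1 + t * (B.1 - V.1), V.2 + t * (B.2 - V.2)) with hY
  have hXa : La.eval X = 0 := by
    have h1 : La.eval X = (1 - s) * La.eval V + s * La.eval A := by
      simp only [hX, Line.eval]; ring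
    rw [h1, hVa, hA]; ring
  have hXm : m.eval X = 0 := by
    have h1 : m.eval X = m.eval V + s * (m.eval A - m.eval V) := by
      simp only [hX, Line.eval]; ring
    rw [h1]; linear_combination -hsmul
  have hYb : Lb.eval Y = 0 := by
    have h1 : Lb.eval Y = (1 - t) * Lb.eval V + t * Lb.eval B := by
      simp only [hY, Line.eval]; ring
    rw [h1, hVb, hB]; ring
  have hYm : m.eval Y = 0 := by
    have h1 : m.eval Y = m.eval V + t * (m.eval B - m.eval V) := by
      simp only [hY, Line.eval]; ring
    rw [h1]; linear_combination -htmul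
  have hXeq : X = Line.inter La m := Line.eq_inter hnpa hXa hXm
  have hYeq : Y = Line.inter Lb m := Line.eq_inter hnpb hYb hYm
  constructor
  · exact ⟨hab, hnpa, hnpb, fun hc => hVne ((Line.mem_pts_iff m V).mp hc)⟩
  · have harea' : triArea La Lb m = (s * t) * triangleArea V A B := by
      unfold triArea
      rw [← hVdef, ← hXeq, ← hYeq]
      unfold triangleArea
      have hdet : ((X.1 - V.1) * (Y.2 - V.2) - (Y.1 - V.1) * (X.2 - V.2))
          = (s * t) * ((A.1 - V.1) * (B.2 - V.2) - (B.1 - V.1) * (A.2 - V.2)) := by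
        simp only [hX, hY]; ring
      rw [hdet, abs_mul, abs_of_pos (mul_pos hs0 ht0)]
      ring
    rw [harea']
    have hst1 : s * t < 1 := by
      rcases hor with h | h
      · have := hs1' h
        nlinarith
      · have := ht1' h
        nlinarith
    nlinarith [harea, hst1, mul_pos hs0 ht0]

lemma strict_side {L : Line} {e : ℝ} (he : e ≠ 0) {S : Set (ℝ × ℝ)}
    (hS : ∀ p ∈ S, 0 ≤ L.eval p * e) {x : ℝ × ℝ} (hx : x ∈ interior S) :
    0 < L.eval x * e := by
  rcases (hS x (interior_subset hx)).lt_or_eq with h | h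
  · exact h
  exfalso
  have hev : L.eval x = 0 := by
    rcases mul_eq_zero.mp h.symm with h' | h'
    · exact h'
    · exact absurd h' he
  obtain ⟨ε, hε, hball⟩ := Metric.mem_nhds_iff.mp (mem_interior_iff_mem_nhds.mp hx)
  set D := |e| * (|L.a| + |L.b|) with hD
  have hD0 : 0 ≤ D := by positivity
  set δ := ε / (D + 1) with hδdef
  have hδ : 0 < δ := by positivity
  have hδε : δ * (D + 1) = ε := div_mul_cancel₀ _ (by positivity)
  set w : ℝ × ℝ := (x.1 - δ * (e * L.a), x.2 - δ * (e * L.b)) with hw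
  have hwball : w ∈ Metric.ball x ε := by
    rw [Metric.mem_ball, Prod.dist_eq]
    have h1 : dist w.1 x.1 = δ * (|e| * |L.a|) := by
      rw [Real.dist_eq, show w.1 - x.1 = -(δ * (e * L.a)) by simp [hw],
        abs_neg, abs_mul, abs_mul, abs_of_pos hδ]
    have h2 : dist w.2 x.2 = δ * (|e| * |L.b|) := by
      rw [Real.dist_eq, show w.2 - x.2 = -(δ * (e * L.b)) by simp [hw],
        abs_neg, abs_mul, abs_mul, abs_of_pos hδ]
    have hb1 : δ * (|e| * |L.a|) < ε := by
      nlinarith [mul_nonneg hδ.le (mul_nonneg (abs_nonneg e) (abs_nonneg L.b))]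
    have hb2 : δ * (|e| * |L.b|) < ε := by
      nlinarith [mul_nonneg hδ.le (mul_nonneg (abs_nonneg e) (abs_nonneg L.a))]
    rw [h1, h2]
    exact max_lt hb1 hb2
  have hwS := hS w (hball hwball)
  have hevw : L.eval w = -(δ * e * (L.a ^ 2 + L.b ^ 2)) := by
    simp only [hw, Line.eval] at hev ⊢
    linear_combination hev
  have hab2 : 0 < L.a ^ 2 + L.b ^ 2 := by
    rcases L.ab_ne with h' | h' <;> positivity
  have he2 : 0 < e * e := mul_self_pos.mpr he
  rw [hevw] at hwS
  nlinarith [mul_pos (mul_pos hδ he2) hab2]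

lemma hull_side {L : Line} {e : ℝ} {p q r z : ℝ × ℝ}
    (hp : 0 ≤ L.eval p * e) (hq : 0 ≤ L.eval q * e) (hr : 0 ≤ L.eval r * e)
    (hz : z ∈ convexHull ℝ ({p, q, r} : Set (ℝ × ℝ))) : 0 ≤ L.eval z * e := by
  have hconv : Convex ℝ {w : ℝ × ℝ | 0 ≤ L.eval w * e} := by
    intro u hu v hv a b ha hb habs
    simp only [Set.mem_setOf_eq] at hu hv ⊢
    have hcombo : L.eval (a • u + b • v) = a * L.eval u + b * L.eval v := by
      simp only [Line.eval, Prod.fst_add, Prod.snd_add, Prod.smul_fst, Prod.smul_snd,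
        smul_eq_mul]
      linear_combination (L.c) * habs
    rw [hcombo]
    nlinarith [mul_nonneg ha hu, mul_nonneg hb hv]
  refine convexHull_min ?_ hconv hz
  intro y hy
  simp only [Set.mem_insert_iff, Set.mem_singleton_iff] at hy
  rcases hy with rfl | rfl | rfl <;> assumption

lemma signcase (v1 v2 v3 a β γ : ℝ) (hα : 0 < a) (hβ : 0 < β) (hγ : 0 < γ)
    (hm0 : a * v1 + β * v2 + γ * v3 = 0)
    (hnotall : ¬ (v1 = 0 ∧ v2 = 0 ∧ v3 = 0))
    (K1 : v1 ≠ 0 → v1 * v2 ≤ 0 → v1 * v3 ≤ 0 → (v2 ≠ 0 ∨ v3 ≠ 0) → False)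
    (K2 : v2 ≠ 0 → v2 * v1 ≤ 0 → v2 * v3 ≤ 0 → (v1 ≠ 0 ∨ v3 ≠ 0) → False)
    (K3 : v3 ≠ 0 → v3 * v1 ≤ 0 → v3 * v2 ≤ 0 → (v1 ≠ 0 ∨ v2 ≠ 0) → False) :
    False := by
  rcases lt_trichotomy v1 0 with h1 | h1 | h1
  · rcases le_or_gt 0 v2 with h2 | h2 <;> rcases le_or_gt 0 v3 with h3 | h3
    · apply K1 (ne_of_lt h1) (by nlinarith) (by nlinarith)
      by_contra hcne
      push_neg at hcne
      rw [hcne.1, hcne.2] at hm0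
      nlinarith [mul_neg_of_pos_of_neg hα h1]
    · have hv2 : 0 < v2 := by
        nlinarith [mul_neg_of_pos_of_neg hα h1, mul_neg_of_pos_of_neg hγ h3]
      exact K2 (ne_of_gt hv2) (by nlinarith) (by nlinarith) (Or.inl (ne_of_lt h1))
    · have hv3 : 0 < v3 := by
        nlinarith [mul_neg_of_pos_of_neg hα h1, mul_neg_of_pos_of_neg hβ h2]
      exact K3 (ne_of_gt hv3) (by nlinarith) (by nlinarith) (Or.inl (ne_of_lt h1))
    · nlinarith [mul_neg_of_pos_of_neg hα h1, mul_neg_of_pos_of_neg hβ h2,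
        mul_neg_of_pos_of_neg hγ h3]
  · rcases lt_trichotomy v2 0 with h2 | h2 | h2
    · have hv3 : 0 < v3 := by
        rw [h1, mul_zero, zero_add] at hm0
        nlinarith [mul_neg_of_pos_of_neg hβ h2]
      exact K2 (ne_of_lt h2) (by rw [h1, mul_zero]) (by nlinarith) (Or.inr (ne_of_gt hv3))
    · have hz3 : γ * v3 = 0 := by
        rw [h1, h2] at hm0
        linarith
      have hv3 : v3 = 0 := by
        rcases mul_eq_zero.mp hz3 with h' | h'
        · exact absurd h' (ne_of_gt hγ)
        · exact h'
      exact hnotall ⟨h1, h2, hv3⟩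
    · have hv3 : v3 < 0 := by
        rw [h1, mul_zero, zero_add] at hm0
        nlinarith [mul_pos hβ h2]
      exact K2 (ne_of_gt h2) (by rw [h1, mul_zero]) (by nlinarith) (Or.inr (ne_of_lt hv3))
  · rcases le_or_gt v2 0 with h2 | h2 <;> rcases le_or_gt v3 0 with h3 | h3
    · apply K1 (ne_of_gt h1) (by nlinarith) (by nlinarith)
      by_contra hcne
      push_neg at hcne
      rw [hcne.1, hcne.2] at hm0
      nlinarith [mul_pos hα h1]
    · have hv2 : v2 < 0 := by
        nlinarith [mul_pos hα h1, mul_pos hγ h3]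
      exact K2 (ne_of_lt hv2) (by nlinarith) (by nlinarith) (Or.inl (ne_of_gt h1))
    · have hv3 : v3 < 0 := by
        nlinarith [mul_pos hα h1, mul_pos hβ h2]
      exact K3 (ne_of_lt hv3) (by nlinarith) (by nlinarith) (Or.inl (ne_of_gt h1))
    · nlinarith [mul_pos hα h1, mul_pos hβ h2, mul_pos hγ h3]
/-- In an arrangement of `n` lines, every minimum-area triangle is a face of the
arrangement: if the triangle formed by lines `i, j, k` has minimal area among
all triangles of the arrangement, then no line of the arrangement meets its
open interior. -/
theorem stmt4 (n : ℕ) (L : Fin n → Line) (hinj : Function.Injective L)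
    (i j k : Fin n) (hT : FormsTriangle (L i) (L j) (L k))
    (hmin : ∀ a b c : Fin n, FormsTriangle (L a) (L b) (L c) →
      triArea (L i) (L j) (L k) ≤ triArea (L a) (L b) (L c)) :
    ∀ m : Fin n, Line.pts (L m) ∩ openTriangle (L i) (L j) (L k) = ∅ := by
  intro m
  rw [Set.eq_empty_iff_forall_notMem]
  rintro x ⟨hxm, hxT⟩
  obtain ⟨hnp12, hnp13, hnp23, hcon⟩ := hT
  set P12 := Line.inter (L i) (L j) with hP12
  set P13 := Line.inter (L i) (L k) with hP13
  set P23 := Line.inter (L j) (L k) with hP23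
  have h121 : (L i).eval P12 = 0 := Line.eval_inter_left hnp12
  have h122 : (L j).eval P12 = 0 := Line.eval_inter_right hnp12
  have h131 : (L i).eval P13 = 0 := Line.eval_inter_left hnp13
  have h133 : (L k).eval P13 = 0 := Line.eval_inter_right hnp13
  have h232 : (L j).eval P23 = 0 := Line.eval_inter_left hnp23
  have h233 : (L k).eval P23 = 0 := Line.eval_inter_right hnp23
  have he3 : (L k).eval P12 ≠ 0 := fun h => hcon ((Line.mem_pts_iff _ _).mpr h)
  have he1 : (L i).eval P23 ≠ 0 := by
    intro h
    have hh : P23 = P12 := Line.eq_inter hnp12 h h232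
    rw [← hh] at he3
    exact he3 h233
  have he2 : (L j).eval P13 ≠ 0 := by
    intro h
    have hh : P13 = P12 := Line.eq_inter hnp12 h131 h
    rw [← hh] at he3
    exact he3 h133
  have hne1213 : P12 ≠ P13 := by
    intro h
    rw [h] at he3
    exact he3 h133
  have hdet : (P13.1 - P12.1) * (P23.2 - P12.2) - (P23.1 - P12.1) * (P13.2 - P12.2) ≠ 0 := by
    intro h
    exact he1 (Line.mem_of_collinear h121 h131 hne1213 h)
  have hΔ : 0 < triangleArea P12 P13 P23 := by
    unfold triangleArea
    have := abs_pos.mpr hdet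
    linarith
  have hxT' : x ∈ interior (convexHull ℝ ({P12, P13, P23} : Set (ℝ × ℝ))) := hxT
  have hside1 : 0 < (L i).eval x * (L i).eval P23 :=
    strict_side (S := convexHull ℝ ({P12, P13, P23} : Set (ℝ × ℝ))) he1
      (fun p hp => hull_side (by rw [h121]; simp) (by rw [h131]; simp)
        (mul_self_nonneg _) hp) hxT'
  have hside2 : 0 < (L j).eval x * (L j).eval P13 :=
    strict_side (S := convexHull ℝ ({P12, P13, P23} : Set (ℝ × ℝ))) he2
      (fun p hp => hull_side (by rw [h122]; simp) (mul_self_nonneg _)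
        (by rw [h232]; simp) hp) hxT'
  have hside3 : 0 < (L k).eval x * (L k).eval P12 :=
    strict_side (S := convexHull ℝ ({P12, P13, P23} : Set (ℝ × ℝ))) he3
      (fun p hp => hull_side (mul_self_nonneg _) (by rw [h133]; simp)
        (by rw [h233]; simp) hp) hxT'
  -- extract a convex combination
  have hxh : x ∈ convexHull ℝ ({P12, P13, P23} : Set (ℝ × ℝ)) := interior_subset hxT'
  rw [show ({P12, P13, P23} : Set (ℝ × ℝ)) = insert P12 {P13, P23} from rfl,
    convexHull_insert ⟨P13, Set.mem_insert _ _⟩, convexHull_pair, mem_convexJoin] at hxh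
  obtain ⟨u, hu, z, hz, hseg⟩ := hxh
  rw [Set.mem_singleton_iff] at hu
  subst hu
  obtain ⟨c, d, hc, hd, hcd, rfl⟩ := hz
  obtain ⟨a, b, ha, hb, habsum, hxeq⟩ := hseg
  have hxcomb : a • P12 + (b * c) • P13 + (b * d) • P23 = x := by
    rw [← hxeq, smul_add, smul_smul, smul_smul, add_assoc]
  have hsum : a + b * c + b * d = 1 := by linear_combination habsum + b * hcd
  have hev1 : (L i).eval x = (b * d) * (L i).eval P23 := by
    rw [← hxcomb, Line.eval_combo3 _ _ _ _ _ _ _ hsum, h121, h131]; ring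
  have hev2 : (L j).eval x = (b * c) * (L j).eval P13 := by
    rw [← hxcomb, Line.eval_combo3 _ _ _ _ _ _ _ hsum, h122, h232]; ring
  have hev3 : (L k).eval x = a * (L k).eval P12 := by
    rw [← hxcomb, Line.eval_combo3 _ _ _ _ _ _ _ hsum, h133, h233]; ring
  have hγ : 0 < b * d := by
    rw [hev1] at hside1
    by_contra hle
    push_neg at hle
    nlinarith [mul_self_nonneg ((L i).eval P23)]
  have hβ : 0 < b * c := by
    rw [hev2] at hside2
    by_contra hle
    push_neg at hle
    nlinarith [mul_self_nonneg ((L j).eval P13)]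
  have hα : 0 < a := by
    rw [hev3] at hside3
    by_contra hle
    push_neg at hle
    nlinarith [mul_self_nonneg ((L k).eval P12)]
  -- the combination on line m
  have hxm0 : (L m).eval x = 0 := (Line.mem_pts_iff _ _).mp hxm
  have hm0 : a * (L m).eval P12 + (b * c) * (L m).eval P13 + (b * d) * (L m).eval P23 = 0 := by
    rw [← Line.eval_combo3 _ _ _ _ _ _ _ hsum, hxcomb, hxm0]
  set β := b * c with hβdef
  set γ := b * d with hγdef
  set v1 := (L m).eval P12 with hv1def
  set v2 := (L m).eval P13 with hv2def
  set v3 := (L m).eval P23 with hv3def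
  have hnotall : ¬ (v1 = 0 ∧ v2 = 0 ∧ v3 = 0) := by
    rintro ⟨z1, z2, z3⟩
    exact hdet (Line.collinear_det z1 z2 z3)
  -- finishers
  have K1 : v1 ≠ 0 → v1 * v2 ≤ 0 → v1 * v3 ≤ 0 → (v2 ≠ 0 ∨ v3 ≠ 0) → False := by
    intro h1 h2 h3 h4
    obtain ⟨hFT, hlt⟩ := cut (L i) (L j) (L m) P13 P23 hnp12 h131 h232 hΔ h2 h3 h1 h4
    have hmin' := hmin i j m hFT
    have hrfl : triArea (L i) (L j) (L k) = triangleArea P12 P13 P23 := rfl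
    rw [hrfl] at hmin'
    linarith
  have K2 : v2 ≠ 0 → v2 * v1 ≤ 0 → v2 * v3 ≤ 0 → (v1 ≠ 0 ∨ v3 ≠ 0) → False := by
    intro h1 h2 h3 h4
    have harea2 : 0 < triangleArea P13 P12 P23 := by rw [triangleArea_perm1]; exact hΔ
    obtain ⟨hFT, hlt⟩ := cut (L i) (L k) (L m) P12 P23 hnp13 h121 h233 harea2 h2 h3 h1 h4
    have hmin' := hmin i k m hFT
    have hrfl : triArea (L i) (L j) (L k) = triangleArea P12 P13 P23 := rfl
    rw [hrfl] at hmin'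
    rw [triangleArea_perm1] at hlt
    linarith
  have K3 : v3 ≠ 0 → v3 * v1 ≤ 0 → v3 * v2 ≤ 0 → (v1 ≠ 0 ∨ v2 ≠ 0) → False := by
    intro h1 h2 h3 h4
    have harea3 : 0 < triangleArea P23 P12 P13 := by rw [triangleArea_perm2]; exact hΔ
    obtain ⟨hFT, hlt⟩ := cut (L j) (L k) (L m) P12 P13 hnp23 h122 h133 harea3 h2 h3 h1 h4
    have hmin' := hmin j k m hFT
    have hrfl : triArea (L i) (L j) (L k) = triangleArea P12 P13 P23 := rfl
    rw [hrfl] at hmin'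
    rw [triangleArea_perm2] at hlt
    linarith
  exact signcase v1 v2 v3 a β γ hα hβ hγ hm0 hnotall K1 K2 K3
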